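/- Suppose F is nonempty, let z* ∈ F_m, and define x* ∈ ℤ^n by x*_k = d_k − h_k·z* for k ∈ {1,…,m} and x*_{m+j} = z*_j for j ∈ {1,…,n−m}. Then x* is a noncooperative Nash equilibrium of the multi-player problem: for every i ∈ {1,…,n} and every integer x̃_i such that the vector obtained from x* by replacing its i-th component with x̃_i lies in P, one has f_i(x*_i) ≤ f_i(x̃_i). -/

import Mathlib

open Matrix

/-- The first `m` columns of `A` (the unimodular basis matrix `B`). -/
def Bmat (m p : ℕ) (A : Matrix (Fin m) (Fin (m + p)) ℤ) : Matrix (Fin m) (Fin m) ℤ :=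
  A.submatrix id (Fin.castAdd p)

/-- `d = B⁻¹ b ∈ ℤ^m`. -/
noncomputable def dVec (m p : ℕ) (A : Matrix (Fin m) (Fin (m + p)) ℤ) (b : Fin m → ℤ) :
    Fin m → ℤ :=
  (Bmat m p A)⁻¹ *ᵥ b

/-- `H = B⁻¹ A₂ ∈ ℤ^{m×p}`, where `A₂` consists of the last `p = n - m` columns. -/
noncomputable def Hmat (m p : ℕ) (A : Matrix (Fin m) (Fin (m + p)) ℤ) :
    Matrix (Fin m) (Fin p) ℤ :=
  (Bmat m p A)⁻¹ * A.submatrix id (Fin.natAdd m)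

/-- The feasible set `P = {x ∈ ℤ^n | Ax = b, 0 ⪯ x ⪯ u}`. -/
def Pset (m p : ℕ) (A : Matrix (Fin m) (Fin (m + p)) ℤ) (b : Fin m → ℤ)
    (u : Fin (m + p) → ℤ) : Set (Fin (m + p) → ℤ) :=
  {x | A *ᵥ x = b ∧ ∀ i, 0 ≤ x i ∧ x i ≤ u i}

/-- `D_j`: the set of minimizers of `f_{m+j}` over the integers in `[0, u_{m+j}]`. -/
def Dset (m p : ℕ) (u : Fin (m + p) → ℤ) (f : Fin (m + p) → ℤ → ℝ) (j : Fin p) :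
    Set ℤ :=
  {v | 0 ≤ v ∧ v ≤ u (Fin.natAdd m j) ∧
    ∀ w : ℤ, 0 ≤ w → w ≤ u (Fin.natAdd m j) →
      f (Fin.natAdd m j) v ≤ f (Fin.natAdd m j) w}

/-- `F = {z ∈ ℤ^{n-m} | z_j ∈ D_j ∀j, 0 ≤ d_k - h_k ⬝ z ≤ u_k ∀k}`. -/
noncomputable def Fset (m p : ℕ) (A : Matrix (Fin m) (Fin (m + p)) ℤ) (b : Fin m → ℤ)
    (u : Fin (m + p) → ℤ) (f : Fin (m + p) → ℤ → ℝ) : Set (Fin p → ℤ) :=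
  {z | (∀ j : Fin p, z j ∈ Dset m p u f j) ∧
    ∀ k : Fin m,
      0 ≤ dVec m p A b k - Hmat m p A k ⬝ᵥ z ∧
      dVec m p A b k - Hmat m p A k ⬝ᵥ z ≤ u (Fin.castAdd p k)}

/-- `g_k(z) = f_k(d_k - h_k ⬝ z)`. -/
noncomputable def gfun (m p : ℕ) (A : Matrix (Fin m) (Fin (m + p)) ℤ) (b : Fin m → ℤ)
    (f : Fin (m + p) → ℤ → ℝ) (k : Fin m) (z : Fin p → ℤ) : ℝ :=
  f (Fin.castAdd p k) (dVec m p A b k - Hmat m p A k ⬝ᵥ z)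


/-- If `det B` is a unit and `A x = b`, the basic components of `x` are determined by
the nonbasic ones: `x_k = d_k - h_k ⬝ x_N`. -/
lemma basic_eq (m p : ℕ) (A : Matrix (Fin m) (Fin (m + p)) ℤ) (b : Fin m → ℤ)
    (hB : IsUnit (Bmat m p A).det) (x : Fin (m + p) → ℤ) (hx : A *ᵥ x = b) (k : Fin m) :
    x (Fin.castAdd p k) = dVec m p A b k -
      Hmat m p A k ⬝ᵥ (fun j => x (Fin.natAdd m j)) := by
  have hsplit : Bmat m p A *ᵥ (fun k => x (Fin.castAdd p k))
      + A.submatrix id (Fin.natAdd m) *ᵥ (fun j => x (Fin.natAdd m j)) = b := by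
    funext r
    have := congrFun hx r
    simpa [mulVec, dotProduct, Fin.sum_univ_add, Bmat] using this
  have h1 : Bmat m p A *ᵥ (fun k => x (Fin.castAdd p k))
      = b - A.submatrix id (Fin.natAdd m) *ᵥ (fun j => x (Fin.natAdd m j)) :=
    eq_sub_of_add_eq hsplit
  have h2 : (fun k => x (Fin.castAdd p k)) =
      dVec m p A b - Hmat m p A *ᵥ (fun j => x (Fin.natAdd m j)) := by
    have h3 := congrArg (fun v => (Bmat m p A)⁻¹ *ᵥ v) h1
    simp only [mulVec_sub, mulVec_mulVec, Matrix.nonsing_inv_mul _ hB, one_mulVec] at h3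
    simpa [dVec, Hmat] using h3
  have := congrFun h2 k
  simpa [Matrix.sub_apply, mulVec] using this

/-- If `F ≠ ∅` and `z* ∈ F_m`, then the corresponding point `x*` is a
noncooperative Nash equilibrium: for every player `i` and every unilateral feasible
deviation `x̃_i` (i.e. replacing the `i`-th component of `x*` by `x̃_i` stays in `P`),
one has `f_i(x*_i) ≤ f_i(x̃_i)`. -/
theorem output_is_nash_equilibrium (m p : ℕ) (hm : 0 < m) (hp : 0 < p)
    (A : Matrix (Fin m) (Fin (m + p)) ℤ) (b : Fin m → ℤ)
    (hB : (Bmat m p A).det = 1 ∨ (Bmat m p A).det = -1)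
    (u : Fin (m + p) → ℤ) (hu : ∀ i, 0 ≤ u i)
    (f : Fin (m + p) → ℤ → ℝ)
    (s : Equiv.Perm (Fin m))
    (FF : ℕ → Set (Fin p → ℤ))
    (hFF0 : FF 0 = Fset m p A b u f)
    (hFFsucc : ∀ i : Fin m,
      FF (↑i + 1) = {z ∈ FF ↑i | ∀ w ∈ FF ↑i,
        gfun m p A b f (s i) z ≤ gfun m p A b f (s i) w})
    (hne : (Fset m p A b u f).Nonempty)
    (zstar : Fin p → ℤ) (hzstar : zstar ∈ FF m)
    (xstar : Fin (m + p) → ℤ)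
    (hx1 : ∀ k : Fin m,
      xstar (Fin.castAdd p k) = dVec m p A b k - Hmat m p A k ⬝ᵥ zstar)
    (hx2 : ∀ j : Fin p, xstar (Fin.natAdd m j) = zstar j) :
    ∀ i : Fin (m + p), ∀ xi : ℤ,
      Function.update xstar i xi ∈ Pset m p A b u → f i (xstar i) ≤ f i xi := by
  have hdown : ∀ t : ℕ, t ≤ m → zstar ∈ FF t → zstar ∈ FF 0 := by
    intro t
    induction t with
    | zero => exact fun _ h => h
    | succ n ih =>
      intro hle hmem
      have hn : n < m := Nat.lt_of_succ_le hle
      have heq := hFFsucc ⟨n, hn⟩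
      simp only [Fin.val_mk] at heq
      rw [heq] at hmem
      exact ih (le_of_lt hn) hmem.1
  have hzF : zstar ∈ Fset m p A b u f := by
    have := hdown m le_rfl hzstar
    rwa [hFF0] at this
  have hBu : IsUnit (Bmat m p A).det := by
    rcases hB with h | h <;> simp [h]
  intro i
  induction i using Fin.addCases with
  | left k =>
    intro xi hxP
    obtain ⟨hAx, _⟩ := hxP
    have hne' : ∀ j : Fin p, Fin.natAdd m j ≠ Fin.castAdd p k := by
      intro j h
      have hv := congrArg Fin.val h
      have hk := k.isLt
      simp [Fin.natAdd, Fin.castAdd, Fin.castLE] at hv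
      omega
    have hxN : (fun j => Function.update xstar (Fin.castAdd p k) xi (Fin.natAdd m j))
        = zstar := by
      funext j
      rw [Function.update_of_ne (hne' j), hx2]
    have hbe := basic_eq m p A b hBu _ hAx k
    rw [Function.update_self, hxN] at hbe
    rw [hx1 k, ← hbe]
  | right j =>
    intro xi hxP
    obtain ⟨_, hbound⟩ := hxP
    have hb := hbound (Fin.natAdd m j)
    rw [Function.update_self] at hb
    rw [hx2 j]
    exact (hzF.1 j).2.2 xi hb.1 hb.2
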